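/- Let λ_i, λ_j, λ_k be real numbers and a_{ij}, a_{kj}, a_{ik}, a_{ki} real numbers. Then the expression d = (a_{ki}a_{ij} + a_{ik}a_{kj} − a_{kj}a_{ij}) · λ_j(λ_i − λ_k)/(1+λ_j²) + a_{ij}·(a_{kj}(λ_k−λ_j)λ_i + λ_j a_{ki}(λ_k−λ_i))/(1+λ_j²) − a_{kj}·(a_{ij}(λ_i−λ_j)λ_k + λ_j a_{ik}(λ_i−λ_k))/(1+λ_j²) − 2a_{ij}·(1+λ_iλ_j)λ_j a_{kj}(λ_k−λ_j)/(1+λ_j²)² + 2a_{kj}·(1+λ_kλ_j)λ_j a_{ij}(λ_i−λ_j)/(1+λ_j²)² equals zero. -/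
import Mathlib


theorem identity_18_vanishes
    (li lj lk aij akj aik aki : ℝ) :
    (aki * aij + aik * akj - akj * aij) * (lj * (li - lk) / (1 + lj ^ 2))
      + aij * ((akj * (lk - lj) * li + lj * aki * (lk - li)) / (1 + lj ^ 2))
      - akj * ((aij * (li - lj) * lk + lj * aik * (li - lk)) / (1 + lj ^ 2))
      - 2 * aij * ((1 + li * lj) * lj * akj * (lk - lj) / (1 + lj ^ 2) ^ 2)
      + 2 * akj * ((1 + lk * lj) * lj * aij * (li - lj) / (1 + lj ^ 2) ^ 2)
      = 0 := by
  have h : (1 + lj ^ 2) ≠ 0 := by positivity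
  field_simp
  ring
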